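/- Let χ be an r-fold vector cross product on a real inner product space V. An (r+1)-dimensional subspace P ⊆ V is preserved by χ (i.e., χ(p₁,...,p_r) ∈ P for all p_i ∈ P) if and only if τ(v₁,...,v_{r+1}) = 0 for any basis v₁,...,v_{r+1} of P, where τ(v₁,...,v_{r+1}) = (1/√(r+1)) Σ_k (-1)^{k-1} v_k ∧ χ(v₁,...,v̂_k,...,v_{r+1}). -/

import Mathlib

open scoped RealInnerProductSpace

section Aux

variable {V : Type*} [NormedAddCommGroup V] [InnerProductSpace ℝ V]

/-- A degree-2 test functional ingredient. -/
noncomputable def vcpTestBilin (a b : V) : V [⋀^Fin 2]→ₗ[ℝ] ℝ :=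
  Matrix.detRowAlternating.compLinearMap (LinearMap.pi ![innerₗ V a, innerₗ V b])

lemma vcpTestBilin_apply (a b x y : V) :
    vcpTestBilin a b ![x, y] = ⟪a, x⟫ * ⟪b, y⟫ - ⟪b, x⟫ * ⟪a, y⟫ := by
  have h : vcpTestBilin a b ![x, y] =
      Matrix.det (Matrix.of fun i j => ![innerₗ V a, innerₗ V b] j (![x, y] i)) := rfl
  rw [h, Matrix.det_fin_two]
  simp

/-- Linear functional on the exterior algebra extracting a degree 2 coefficient. -/
noncomputable def vcpTest (a b : V) : ExteriorAlgebra ℝ V →ₗ[ℝ] ℝ :=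
  ExteriorAlgebra.liftAlternating
    (fun i => match i with
      | 2 => vcpTestBilin a b
      | _ => 0)

lemma vcpTest_ι_mul (a b x y : V) :
    vcpTest a b (ExteriorAlgebra.ι ℝ x * ExteriorAlgebra.ι ℝ y)
      = ⟪a, x⟫ * ⟪b, y⟫ - ⟪b, x⟫ * ⟪a, y⟫ := by
  rw [vcpTest, ExteriorAlgebra.liftAlternating_ι_mul, ExteriorAlgebra.liftAlternating_ι]
  exact vcpTestBilin_apply a b x y

variable {r : ℕ}

lemma vcp_swap_inner (χ : AlternatingMap ℝ V V (Fin r))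
    (hperp : ∀ (v : Fin r → V) (i : Fin r), ⟪χ v, v i⟫ = 0)
    (u : Fin r → V) (p : Fin r) (x y : V) :
    ⟪χ (Function.update u p x), y⟫ = -⟪χ (Function.update u p y), x⟫ := by
  have h := hperp (Function.update u p (x + y)) p
  rw [Function.update_self, χ.map_update_add, inner_add_left, inner_add_right,
    inner_add_right] at h
  have hx := hperp (Function.update u p x) p
  rw [Function.update_self] at hx
  have hy := hperp (Function.update u p y) p
  rw [Function.update_self] at hy
  linarith

lemma vcp_adjacent (χ : AlternatingMap ℝ V V (Fin r))
    (hperp : ∀ (v : Fin r → V) (i : Fin r), ⟪χ v, v i⟫ = 0)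
    (v : Fin (r+1) → V) (k : Fin r) :
    ⟪χ (fun i => v ((Fin.castSucc k).succAbove i)), v (Fin.castSucc k)⟫
      = -⟪χ (fun i => v ((Fin.succ k).succAbove i)), v (Fin.succ k)⟫ := by
  set u : Fin r → V := fun i => v ((Fin.castSucc k).succAbove i) with hu
  have h1 : Function.update u k (v (Fin.succ k)) = u := by
    funext q
    rcases eq_or_ne q k with rfl | hq
    · rw [Function.update_self, hu]
      simp
    · rw [Function.update_of_ne hq]
  have h2 : Function.update u k (v (Fin.castSucc k)) = fun i => v ((Fin.succ k).succAbove i) := by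
    funext q
    rcases eq_or_ne q k with rfl | hq
    · rw [Function.update_self, Fin.succAbove_succ_self]
    · rw [Function.update_of_ne hq, hu]
      show v (k.castSucc.succAbove q) = v (k.succ.succAbove q)
      congr 1
      rcases lt_or_gt_of_ne hq with h | h
      · rw [Fin.succAbove_castSucc_of_lt _ _ h, Fin.succAbove_succ_of_le _ _ h.le]
      · rw [Fin.succAbove_castSucc_of_le _ _ h.le, Fin.succAbove_succ_of_lt _ _ h]
  have := vcp_swap_inner χ hperp u k (v (Fin.succ k)) (v (Fin.castSucc k))
  rw [h1, h2] at this
  rw [hu, this]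

lemma vcp_const (χ : AlternatingMap ℝ V V (Fin r))
    (hperp : ∀ (v : Fin r → V) (i : Fin r), ⟪χ v, v i⟫ = 0)
    (v : Fin (r+1) → V) (k : Fin (r+1)) :
    ((-1 : ℝ)) ^ (k : ℕ) * ⟪χ (fun i => v (k.succAbove i)), v k⟫
      = ⟪χ (fun i => v ((0 : Fin (r+1)).succAbove i)), v 0⟫ := by
  induction k using Fin.induction with
  | zero => simp
  | succ i ih =>
    have h := vcp_adjacent χ hperp v i
    rw [← ih, Fin.coe_castSucc, Fin.val_succ, pow_succ, h]
    ring

end Aux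

section Fwd
variable {V : Type*} [NormedAddCommGroup V] [InnerProductSpace ℝ V] {r : ℕ}

lemma vcp_forward (χ : AlternatingMap ℝ V V (Fin r))
    (hperp : ∀ (v : Fin r → V) (i : Fin r), ⟪χ v, v i⟫ = 0)
    (P : Submodule ℝ V)
    (hχ : ∀ p : Fin r → V, (∀ i, p i ∈ P) → χ p ∈ P)
    (v : Fin (r+1) → V) (hv : LinearIndependent ℝ v)
    (hsp : Submodule.span ℝ (Set.range v) = P) :
    ∑ k : Fin (r+1), ((-1 : ℝ) ^ (k : ℕ)) •
        (ExteriorAlgebra.ι ℝ (v k) *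
          ExteriorAlgebra.ι ℝ (χ (fun i => v (k.succAbove i)))) = 0 := by
  have hmem : ∀ m, v m ∈ P := fun m => hsp ▸ Submodule.subset_span ⟨m, rfl⟩
  have hwP : ∀ k : Fin (r+1), χ (fun i => v (k.succAbove i)) ∈ P :=
    fun k => hχ _ (fun i => hmem _)
  set φ : ℝ := ⟪χ (fun i => v ((0 : Fin (r+1)).succAbove i)), v 0⟫ with hφdef
  have hd : ∀ k : Fin (r+1), ⟪χ (fun i => v (k.succAbove i)), v k⟫ = (-1 : ℝ) ^ (k : ℕ) * φ := by
    intro k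
    have h := vcp_const χ hperp v k
    have h2 := congrArg (fun t => (-1 : ℝ) ^ (k : ℕ) * t) h
    rw [← mul_assoc, ← mul_pow] at h2
    simpa [hφdef] using h2
  have hperp' : ∀ (k m : Fin (r+1)), m ≠ k → ⟪χ (fun i => v (k.succAbove i)), v m⟫ = 0 := by
    intro k m hmk
    obtain ⟨q, hq⟩ := Fin.exists_succAbove_eq (Ne.symm hmk).symm
    have h := hperp (fun i => v (k.succAbove i)) q
    rwa [hq] at h
  set z : Fin (r+1) → V := fun k => ((-1 : ℝ) ^ (k : ℕ)) • χ (fun i => v (k.succAbove i)) with hzdef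
  have hzP : ∀ k, z k ∈ P := fun k => Submodule.smul_mem _ _ (hwP k)
  have hzv : ∀ k m, ⟪z k, v m⟫ = if m = k then φ else 0 := by
    intro k m
    rw [hzdef]
    simp only
    rw [real_inner_smul_left]
    by_cases h : m = k
    · subst h
      rw [hd, ← mul_assoc, ← mul_pow]
      simp
    · rw [hperp' _ _ h, mul_zero, if_neg h]
  let b : Module.Basis (Fin (r+1)) ℝ P := (Module.Basis.span hv).map (LinearEquiv.ofEq _ _ hsp)
  have hb : ∀ j, (b j : V) = v j := by
    intro j
    rw [Module.Basis.map_apply, LinearEquiv.coe_ofEq_apply]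
    exact congrArg Subtype.val (Module.Basis.span_apply hv j)
  set c : Fin (r+1) → Fin (r+1) → ℝ := fun k j => b.repr ⟨z k, hzP k⟩ j with hc
  have hzc : ∀ k, z k = ∑ j, c k j • v j := by
    intro k
    have h1 := b.sum_repr ⟨z k, hzP k⟩
    have h2 := congrArg (Subtype.val : P → V) h1
    simp only [Submodule.coe_sum, SetLike.val_smul] at h2
    rw [← h2]
    congr 1
    funext j
    rw [hb]
  have hinner : ∀ i j, ⟪z i, z j⟫ = c j i * φ := by
    intro i j
    rw [hzc j, inner_sum]
    rw [Finset.sum_eq_single i]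
    · rw [real_inner_smul_right, hzv, if_pos rfl]
    · intro m _ hmi
      rw [real_inner_smul_right, hzv, if_neg hmi, mul_zero]
    · intro h
      exact absurd (Finset.mem_univ i) h
  have hstep : ∀ k : Fin (r+1), ((-1 : ℝ) ^ (k : ℕ)) •
      (ExteriorAlgebra.ι ℝ (v k) * ExteriorAlgebra.ι ℝ (χ (fun i => v (k.succAbove i))))
      = ExteriorAlgebra.ι ℝ (v k) * ExteriorAlgebra.ι ℝ (z k) := by
    intro k
    rw [hzdef]
    simp only
    rw [map_smul, mul_smul_comm]
  rw [Finset.sum_congr rfl (fun k _ => hstep k)]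
  by_cases hφ : φ = 0
  · have hz0 : ∀ k, z k = 0 := by
      intro k
      have h := hinner k k
      rw [hφ, mul_zero] at h
      exact inner_self_eq_zero.mp h
    simp [hz0]
  · have hcsym : ∀ i j, c i j = c j i := by
      intro i j
      have h1 := hinner i j
      rw [real_inner_comm, hinner j i] at h1
      exact mul_right_cancel₀ hφ h1
    have hexp : ∀ k, ExteriorAlgebra.ι ℝ (v k) * ExteriorAlgebra.ι ℝ (z k)
        = ∑ j, c k j • (ExteriorAlgebra.ι ℝ (v k) * ExteriorAlgebra.ι ℝ (v j)) := by
      intro k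
      rw [hzc k, map_sum, Finset.mul_sum]
      congr 1
      funext j
      rw [map_smul, mul_smul_comm]
    rw [Finset.sum_congr rfl (fun k _ => hexp k)]
    set T := ∑ k : Fin (r+1), ∑ j : Fin (r+1),
      c k j • (ExteriorAlgebra.ι ℝ (v k) * ExteriorAlgebra.ι ℝ (v j)) with hT
    have hA : ∀ a b : Fin (r+1), ExteriorAlgebra.ι ℝ (v b) * ExteriorAlgebra.ι ℝ (v a)
        = -(ExteriorAlgebra.ι ℝ (v a) * ExteriorAlgebra.ι ℝ (v b)) := fun a b =>
      eq_neg_of_add_eq_zero_left (ExteriorAlgebra.ι_add_mul_swap _ _)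
    have hneg : T = -T := by
      calc T = ∑ j : Fin (r+1), ∑ k : Fin (r+1),
            c k j • (ExteriorAlgebra.ι ℝ (v k) * ExteriorAlgebra.ι ℝ (v j)) := Finset.sum_comm
        _ = ∑ j : Fin (r+1), ∑ k : Fin (r+1),
            -(c j k • (ExteriorAlgebra.ι ℝ (v j) * ExteriorAlgebra.ι ℝ (v k))) := by
            apply Finset.sum_congr rfl
            intro j _
            apply Finset.sum_congr rfl
            intro k _
            rw [hcsym k j, hA j k, smul_neg]
        _ = -T := by
            simp only [Finset.sum_neg_distrib]
            rfl
    have h2 : (2 : ℝ) • T = 0 := by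
      rw [two_smul]
      nth_rewrite 1 [hneg]
      rw [neg_add_cancel]
    have h3 := congrArg (fun x => (2⁻¹ : ℝ) • x) h2
    simpa [smul_smul] using h3

end Fwd

section Bwd
variable {V : Type*} [NormedAddCommGroup V] [InnerProductSpace ℝ V] {r : ℕ}

lemma vcp_backward (χ : AlternatingMap ℝ V V (Fin r))
    (hperp : ∀ (v : Fin r → V) (i : Fin r), ⟪χ v, v i⟫ = 0)
    (P : Submodule ℝ V) (hdim : Module.finrank ℝ P = r + 1)
    (hτ : ∀ v : Fin (r+1) → V, LinearIndependent ℝ v →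
        Submodule.span ℝ (Set.range v) = P →
        (Real.sqrt (r+1))⁻¹ •
          ∑ k : Fin (r+1), ((-1 : ℝ) ^ (k : ℕ)) •
            (ExteriorAlgebra.ι ℝ (v k) *
              ExteriorAlgebra.ι ℝ (χ (fun i => v (k.succAbove i)))) = 0) :
    ∀ p : Fin r → V, (∀ i, p i ∈ P) → χ p ∈ P := by
  haveI : FiniteDimensional ℝ P := FiniteDimensional.of_finrank_pos (by rw [hdim]; omega)
  let ob : OrthonormalBasis (Fin (r+1)) ℝ P := (stdOrthonormalBasis ℝ P).reindex (finCongr hdim)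
  set e : Fin (r+1) → V := fun i => ((ob i : P) : V) with he
  have he_on : Orthonormal ℝ e := ob.orthonormal.comp_linearIsometry P.subtypeₗᵢ
  have he_sp : Submodule.span ℝ (Set.range e) = P := by
    have h1 : Set.range e = P.subtype '' Set.range (⇑ob) := by
      rw [← Set.range_comp]; rfl
    rw [h1, Submodule.span_image, ← ob.coe_toBasis, Module.Basis.span_eq, Submodule.map_subtype_top]
  have hsum : ∑ k : Fin (r+1), ((-1 : ℝ) ^ (k : ℕ)) •
      (ExteriorAlgebra.ι ℝ (e k) *
        ExteriorAlgebra.ι ℝ (χ (fun i => e (k.succAbove i)))) = 0 := by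
    have h0 := hτ e he_on.linearIndependent he_sp
    have hpos : (0:ℝ) < Real.sqrt (r+1) := Real.sqrt_pos.mpr (by positivity)
    have hs : ((Real.sqrt (r+1))⁻¹ : ℝ) ≠ 0 := (inv_pos.mpr hpos).ne'
    exact (smul_eq_zero.mp h0).resolve_left hs
  have hee : ∀ i j : Fin (r+1), ⟪e i, e j⟫ = if i = j then (1:ℝ) else 0 :=
    orthonormal_iff_ite.mp he_on
  have hperp' : ∀ (k m : Fin (r+1)), m ≠ k → ⟪χ (fun i => e (k.succAbove i)), e m⟫ = 0 := by
    intro k m hmk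
    obtain ⟨q, hq⟩ := Fin.exists_succAbove_eq hmk
    have h := hperp (fun i => e (k.succAbove i)) q
    rwa [hq] at h
  set n : Fin (r+1) → V := fun k => χ (fun i => e (k.succAbove i))
      - ⟪χ (fun i => e (k.succAbove i)), e k⟫ • e k with hn
  have hne : ∀ k m, ⟪n k, e m⟫ = 0 := by
    intro k m
    rw [hn]
    simp only
    rw [inner_sub_left, real_inner_smul_left, hee]
    by_cases h : m = k
    · subst h
      rw [if_pos rfl, mul_one, sub_self]
    · rw [hperp' k m h, if_neg (fun hh => h hh.symm), mul_zero, sub_zero]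
  have hn0 : ∀ m, n m = 0 := by
    intro m
    have hF := congrArg (vcpTest (e m) (n m)) hsum
    rw [map_sum, map_zero] at hF
    have hterm : ∀ k : Fin (r+1),
        vcpTest (e m) (n m) (((-1:ℝ)^(k:ℕ)) •
          (ExteriorAlgebra.ι ℝ (e k) *
            ExteriorAlgebra.ι ℝ (χ (fun i => e (k.succAbove i)))))
        = if k = m then ((-1:ℝ)^(m:ℕ)) * ⟪n m, n m⟫ else 0 := by
      intro k
      rw [map_smul, vcpTest_ι_mul, smul_eq_mul]
      rw [hee m k]
      have h2 : ⟪n m, e k⟫ = 0 := hne m k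
      rw [h2, zero_mul, sub_zero]
      by_cases h : k = m
      · subst h
        rw [if_pos rfl, if_pos rfl, one_mul]
        congr 1
        have h3 : χ (fun i => e (k.succAbove i)) = n k + ⟪χ (fun i => e (k.succAbove i)), e k⟫ • e k := by
          rw [hn]; simp
        rw [h3, inner_add_right, real_inner_smul_right, hne k k, mul_zero, add_zero]
      · rw [if_neg (fun hh => h hh.symm), if_neg h, zero_mul, mul_zero]
    rw [Finset.sum_congr rfl (fun k _ => hterm k), Finset.sum_ite_eq' Finset.univ m,
      if_pos (Finset.mem_univ m)] at hF
    have h4 : ⟪n m, n m⟫ = 0 := by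
      have h5 : ((-1:ℝ)^(m:ℕ)) ≠ 0 := by
        apply pow_ne_zero; norm_num
      exact (mul_eq_zero.mp hF).resolve_left h5
    exact inner_self_eq_zero.mp h4
  have heP : ∀ k, e k ∈ P := fun k => SetLike.coe_mem (ob k)
  have hkP : ∀ k : Fin (r+1), χ (fun i => e (k.succAbove i)) ∈ P := by
    intro k
    have h := hn0 k
    rw [hn] at h
    simp only [sub_eq_zero] at h
    rw [h]
    exact Submodule.smul_mem _ _ (heP k)
  have hedP : ∀ d : Fin r → Fin (r+1), χ (fun i => e (d i)) ∈ P := by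
    intro d
    by_cases hd : Function.Injective d
    · have hns : ¬Function.Surjective d := by
        intro hs
        have := Fintype.card_le_of_surjective d hs
        simp at this
      obtain ⟨k, hk⟩ := not_forall.mp hns
      push_neg at hk
      have hex : ∀ q, ∃ c, k.succAbove c = d q := fun q => Fin.exists_succAbove_eq (hk q)
      choose σ hσ using hex
      have hσinj : Function.Injective σ := by
        intro a b hab
        apply hd
        rw [← hσ a, ← hσ b, hab]
      have hσbij : Function.Bijective σ :=
        (Fintype.bijective_iff_injective_and_card σ).mpr ⟨hσinj, rfl⟩
      let π : Equiv.Perm (Fin r) := Equiv.ofBijective σ hσbij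
      have hcomp : (fun i => e (d i)) = (fun i => e (k.succAbove i)) ∘ π := by
        funext q
        show e (d q) = e (k.succAbove (π q))
        rw [show π q = σ q from rfl, hσ q]
      rw [hcomp, χ.map_perm]
      rcases Int.units_eq_one_or (Equiv.Perm.sign π) with h | h
      · rw [h, one_smul]; exact hkP k
      · rw [h, Units.smul_def, Units.val_neg, Units.val_one, neg_smul, one_smul]
        exact Submodule.neg_mem _ (hkP k)
    · obtain ⟨a, b, hab, hne'⟩ := Function.not_injective_iff.mp hd
      have hni : ¬Function.Injective (fun i => e (d i)) :=
        Function.not_injective_iff.mpr ⟨a, b, by rw [hab], hne'⟩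
      rw [χ.map_eq_zero_of_not_injective _ hni]
      exact P.zero_mem
  intro p hp
  have hpa : ∀ i, p i = ∑ j, (ob.toBasis.repr ⟨p i, hp i⟩ j) • e j := by
    intro i
    have h1 := ob.toBasis.sum_repr ⟨p i, hp i⟩
    have h2 := congrArg (Subtype.val : P → V) h1
    simp only [Submodule.coe_sum, SetLike.val_smul, OrthonormalBasis.coe_toBasis] at h2
    simp only [he]
    exact h2.symm
  have h1 : χ p = χ (fun i => ∑ j, (ob.toBasis.repr ⟨p i, hp i⟩ j) • e j) := by
    congr 1
    funext i
    exact hpa i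
  have h2 : χ (fun i => ∑ j, (ob.toBasis.repr ⟨p i, hp i⟩ j) • e j)
      = ∑ d : Fin r → Fin (r+1), χ (fun i => (ob.toBasis.repr ⟨p i, hp i⟩ (d i)) • e (d i)) :=
    χ.toMultilinearMap.map_sum (fun i j => (ob.toBasis.repr ⟨p i, hp i⟩ j) • e j)
  have h3 : ∀ d : Fin r → Fin (r+1),
      χ (fun i => (ob.toBasis.repr ⟨p i, hp i⟩ (d i)) • e (d i))
      = (∏ i, ob.toBasis.repr ⟨p i, hp i⟩ (d i)) • χ (fun i => e (d i)) :=
    fun d => χ.toMultilinearMap.map_smul_univ _ _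
  rw [h1, h2, Finset.sum_congr rfl (fun d _ => h3 d)]
  exact Submodule.sum_mem _ (fun d _ => Submodule.smul_mem _ _ (hedP d))

end Bwd

/-- Let `χ` be an `r`-fold vector cross product on `V`. An `(r+1)`-dimensional subspace
`P ⊆ V` is preserved by `χ` iff `τ(v₁,...,v_{r+1}) = 0` for every basis `v₁,...,v_{r+1}`
of `P`, where `τ(v₁,...,v_{r+1}) = (1/√(r+1)) Σ_k (-1)^{k-1} v_k ∧ χ(v₁,...,v̂_k,...,v_{r+1})`
is viewed in the exterior algebra `Λ²V ⊆ ΛV`. -/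
theorem instanton_iff_tau_vanishes
    {V : Type*} [NormedAddCommGroup V] [InnerProductSpace ℝ V] (r : ℕ)
    (χ : AlternatingMap ℝ V V (Fin r))
    (hperp : ∀ (v : Fin r → V) (i : Fin r), ⟪χ v, v i⟫ = 0)
    (hnorm : ∀ v : Fin r → V,
      ⟪χ v, χ v⟫ = Matrix.det (Matrix.of fun i j => ⟪v i, v j⟫))
    (P : Submodule ℝ V) (hdim : Module.finrank ℝ P = r + 1) :
    (∀ p : Fin r → V, (∀ i, p i ∈ P) → χ p ∈ P) ↔
      (∀ v : Fin (r+1) → V, LinearIndependent ℝ v →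
        Submodule.span ℝ (Set.range v) = P →
        (Real.sqrt (r+1))⁻¹ •
          ∑ k : Fin (r+1), ((-1 : ℝ) ^ (k : ℕ)) •
            (ExteriorAlgebra.ι ℝ (v k) *
              ExteriorAlgebra.ι ℝ (χ (fun i => v (k.succAbove i)))) = 0) := by
  constructor
  · intro hχ v hv hsp
    rw [vcp_forward χ hperp P hχ v hv hsp, smul_zero]
  · intro hτ
    exact vcp_backward χ hperp P hdim hτ
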